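/- (Syz(G) from Syz(L_G).) Let A be a quasi-commutative bijective σ-PBW extension, G = {g_1,…,g_t} a Gröbner basis, L_G = [lt(g_1) ⋯ lt(g_t)] the matrix of leading terms, and Z(L_G) a matrix of homogeneous generators of Syz(L_G). Let P be a matrix obtained by dividing each vector Z(L_G)^T G^T-combination by G, so that Z(L_G)^T G^T = P^T G^T with the division algorithm degree bounds. Then the column module of Z(L_G) − P equals Syz(G). -/

import Mathlib

namespace SPBW

/-- Monomials of the free module `A^m` over a σ-PBW extension in `n` variables:
pairs `(α, i)` representing `x^α e_i`. -/
abbrev Mon (n m : ℕ) := (Fin n → ℕ) × Fin m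

/-- A presentation of the ring `A` as a σ-PBW (skew PBW) extension of `R`
in variables `x_1, …, x_n` (Definition 1 together with Theorem 6). -/
structure Ext (R A : Type*) [Ring R] [Ring A] (n : ℕ) where
  /-- the inclusion `R ⊆ A` -/
  φ : R →+* A
  inj : Function.Injective φ
  /-- the variables `x₁, …, xₙ` -/
  x : Fin n → A
  /-- the standard monomials `x^α = x₁^{α₁} ⋯ xₙ^{αₙ}` -/
  mono : (Fin n → ℕ) → A
  mono_def : ∀ α, mono α = (List.ofFn fun i => x i ^ α i).prod
  /-- coordinates of an element of `A` in the left `R`-basis `Mon(A)` -/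
  coord : A → ((Fin n → ℕ) →₀ R)
  coord_add : ∀ a b, coord (a + b) = coord a + coord b
  repr' : ∀ a : A, a = ((coord a).sum fun α r => φ r * mono α)
  coord_eq : ∀ (a : A) (cf : (Fin n → ℕ) →₀ R),
      a = (cf.sum fun α r => φ r * mono α) → coord a = cf
  /-- the injective endomorphisms `σ^α` of Proposition 2 / Theorem 6(a) -/
  σp : (Fin n → ℕ) → R →+* R
  σp_inj : ∀ α, Function.Injective (σp α)
  /-- the structure constants `c_{α,β}` of Theorem 6(b) -/
  cst : (Fin n → ℕ) → (Fin n → ℕ) → R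
  cst_left_inv : ∀ α β, ∃ c', c' * cst α β = 1
  /-- `x^α r = σ^α(r) x^α + p_{α,r}` with `p_{α,r}` of lower degree -/
  mono_mul_r : ∀ (α : Fin n → ℕ) (r : R), ∃ p : A,
      mono α * φ r = φ (σp α r) * mono α + p ∧
      (p = 0 ∨ ((coord p).support.sup fun β => ∑ i, β i) < ∑ i, α i)
  /-- `x^α x^β = c_{α,β} x^{α+β} + p_{α,β}` with `p_{α,β}` of lower degree -/
  mono_mul : ∀ α β : Fin n → ℕ, ∃ p : A,
      mono α * mono β = φ (cst α β) * mono (α + β) + p ∧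
      (p = 0 ∨ ((coord p).support.sup fun γ => ∑ i, γ i) < ∑ i, (α + β) i)

/-- A quasi-commutative σ-PBW extension: `x^α r = σ^α(r) x^α` and
`x^α x^β = c_{α,β} x^{α+β}` exactly (Remark 7(iii)). -/
structure QCExt (R A : Type*) [Ring R] [Ring A] (n : ℕ) extends Ext R A n where
  mono_mul_r' : ∀ (α : Fin n → ℕ) (r : R), mono α * φ r = φ (σp α r) * mono α
  mono_mul' : ∀ α β : Fin n → ℕ, mono α * mono β = φ (cst α β) * mono (α + β)

/-- A bijective quasi-commutative σ-PBW extension: moreover all `σ^α` are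
bijective and all structure constants `c_{α,β}` are invertible. -/
structure QCBijExt (R A : Type*) [Ring R] [Ring A] (n : ℕ) extends QCExt R A n where
  σp_bij : ∀ α, Function.Bijective (σp α)
  cst_unit : ∀ α β, IsUnit (cst α β)

/-- `le` is a monomial order on `Mon(A^m)` (Definition 15): a (total) order
compatible with multiplication by monomials, with `x^β x^α e_i ⪰ x^α e_i`,
and degree compatible. -/
structure IsMonomialOrder (n m : ℕ) (le : Mon n m → Mon n m → Prop) : Prop where
  refl : ∀ X, le X X
  trans : ∀ X Y Z, le X Y → le Y Z → le X Z
  antisymm : ∀ X Y, le X Y → le Y X → X = Y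
  total : ∀ X Y, le X Y ∨ le Y X
  mul_left : ∀ (α β : Fin n → ℕ) (i : Fin m), le (α, i) (β + α, i)
  compat : ∀ (α β : Fin n → ℕ) (i j : Fin m) (γ : Fin n → ℕ),
      le (α, i) (β, j) → le (γ + α, i) (γ + β, j)
  deg_compat : ∀ (α β : Fin n → ℕ) (i j : Fin m),
      (∑ k, α k) < ∑ k, β k → le (α, i) (β, j)

/-- `le` is a monomial order on `Mon(A)` (Definition 9). -/
structure IsMonomialOrderA (n : ℕ) (le : (Fin n → ℕ) → (Fin n → ℕ) → Prop) : Prop where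
  refl : ∀ α, le α α
  trans : ∀ α β γ, le α β → le β γ → le α γ
  antisymm : ∀ α β, le α β → le β α → α = β
  total : ∀ α β, le α β ∨ le β α
  add_compat : ∀ α β γ, le α β → le (γ + α) (γ + β)
  zero_le : ∀ α, le 0 α
  deg_compat : ∀ α β, (∑ i, α i) < ∑ i, β i → le α β

variable {R A : Type*} [Ring R] [Ring A] {n m : ℕ}

/-- `α` is the exponent of the leading monomial of `a ∈ A` w.r.t. the order `leA`. -/
def IsLMA (E : Ext R A n) (leA : (Fin n → ℕ) → (Fin n → ℕ) → Prop)
    (a : A) (α : Fin n → ℕ) : Prop :=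
  E.coord a α ≠ 0 ∧ ∀ β, E.coord a β ≠ 0 → leA β α

/-- `X` is the leading monomial of the vector `f ∈ A^m` w.r.t. the order `le`. -/
def IsLM (E : Ext R A n) (le : Mon n m → Mon n m → Prop)
    (f : Fin m → A) (X : Mon n m) : Prop :=
  E.coord (f X.2) X.1 ≠ 0 ∧
    ∀ (β : Fin n → ℕ) (v : Fin m), E.coord (f v) β ≠ 0 → le (β, v) X

/-- One step reduction `f →_F h` (Definition 20). -/
def Reduces (E : Ext R A n) (le : Mon n m → Mon n m → Prop)
    (F : Set (Fin m → A)) (f h : Fin m → A) : Prop :=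
  ∃ X : Mon n m, IsLM E le f X ∧
    ∃ (t : ℕ) (g : Fin t → Fin m → A) (r : Fin t → R)
      (a : Fin t → Fin n → ℕ) (β : Fin t → Fin n → ℕ),
      (∀ i, g i ∈ F) ∧
      (∀ i, IsLM E le (g i) (β i, X.2)) ∧
      (∀ i, a i + β i = X.1) ∧
      E.coord (f X.2) X.1 =
        ∑ i, r i * (E.σp (a i) (E.coord (g i X.2) (β i)) * E.cst (a i) (β i)) ∧
      h = f - ∑ i, (E.φ (r i) * E.mono (a i)) • g i

/-- `f` is reduced (minimal) w.r.t. `F`. -/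
def Reduced (E : Ext R A n) (le : Mon n m → Mon n m → Prop)
    (F : Set (Fin m → A)) (f : Fin m → A) : Prop :=
  f = 0 ∨ ¬ ∃ h, Reduces E le F f h

/-- `f →_F,+ h`: reduction in finitely many steps. -/
def ReducesStar (E : Ext R A n) (le : Mon n m → Mon n m → Prop)
    (F : Set (Fin m → A)) : (Fin m → A) → (Fin m → A) → Prop :=
  Relation.ReflTransGen (Reduces E le F)

/-- `G` is a Gröbner basis of the submodule `M ⊆ A^m` (Definition 25):
a finite set of nonzero vectors of `M` such that every nonzero `f ∈ M`
is reducible w.r.t. `G`. -/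
def IsGB (E : Ext R A n) (le : Mon n m → Mon n m → Prop)
    (M : Submodule A (Fin m → A)) (G : Finset (Fin m → A)) : Prop :=
  (↑G : Set (Fin m → A)) ⊆ (M : Set (Fin m → A)) \ {0} ∧
    ∀ f ∈ M, f ≠ 0 → ∃ h, Reduces E le (↑G) f h

end SPBW
namespace SyzAux
open SPBW

variable {R A : Type*} [Ring R] [Ring A] {n m : ℕ}

/-- `coord` as an additive monoid hom. -/
noncomputable def coordHom (E : Ext R A n) : A →+ ((Fin n → ℕ) →₀ R) :=
  AddMonoidHom.mk' E.coord E.coord_add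

lemma coordHom_apply (E : Ext R A n) (a : A) : coordHom E a = E.coord a := rfl

lemma coord_zero (E : Ext R A n) : E.coord (0 : A) = 0 := by
  rw [← coordHom_apply]; exact map_zero _

lemma coord_sub (E : Ext R A n) (a b : A) :
    E.coord (a - b) = E.coord a - E.coord b := by
  rw [← coordHom_apply, ← coordHom_apply, ← coordHom_apply]; exact map_sub _ _ _

lemma coord_sum (E : Ext R A n) {ι : Type*} (s : Finset ι) (f : ι → A) :
    E.coord (∑ k ∈ s, f k) = ∑ k ∈ s, E.coord (f k) := by
  simp only [← coordHom_apply]; exact map_sum _ _ _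

lemma coord_term (E : Ext R A n) (r : R) (α : Fin n → ℕ) :
    E.coord (E.φ r * E.mono α) = Finsupp.single α r := by
  apply E.coord_eq
  rw [Finsupp.sum_single_index]
  simp

lemma eq_zero_of_coord (E : Ext R A n) (a : A) (h : E.coord a = 0) : a = 0 := by
  have := E.repr' a
  rw [h] at this
  simpa using this

lemma term_mul_term (E : QCExt R A n) (r s : R) (ξ β : Fin n → ℕ) :
    (E.φ r * E.mono ξ) * (E.φ s * E.mono β) =
      E.φ (r * E.σp ξ s * E.cst ξ β) * E.mono (ξ + β) := by
  have h1 : E.mono ξ * E.φ s = E.φ (E.σp ξ s) * E.mono ξ := E.mono_mul_r' ξ s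
  have h2 : E.mono ξ * E.mono β = E.φ (E.cst ξ β) * E.mono (ξ + β) := E.mono_mul' ξ β
  calc (E.φ r * E.mono ξ) * (E.φ s * E.mono β)
      = E.φ r * (E.mono ξ * E.φ s) * E.mono β := by simp only [mul_assoc]
    _ = E.φ r * (E.φ (E.σp ξ s) * E.mono ξ) * E.mono β := by rw [h1]
    _ = (E.φ r * E.φ (E.σp ξ s)) * (E.mono ξ * E.mono β) := by simp only [mul_assoc]
    _ = (E.φ r * E.φ (E.σp ξ s)) * (E.φ (E.cst ξ β) * E.mono (ξ + β)) := by rw [h2]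
    _ = E.φ (r * E.σp ξ s * E.cst ξ β) * E.mono (ξ + β) := by
        rw [map_mul, map_mul]; simp only [mul_assoc]

lemma mul_expand (E : QCExt R A n) (a b : A) :
    a * b = ∑ ξ ∈ (E.coord a).support, ∑ β ∈ (E.coord b).support,
      E.φ (E.coord a ξ * E.σp ξ (E.coord b β) * E.cst ξ β) * E.mono (ξ + β) := by
  conv_lhs => rw [E.repr' a, E.repr' b]
  rw [Finsupp.sum, Finsupp.sum, Finset.sum_mul]
  refine Finset.sum_congr rfl fun ξ _ => ?_
  rw [Finset.mul_sum]
  refine Finset.sum_congr rfl fun β _ => ?_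
  exact term_mul_term E _ _ _ _

lemma coord_term_sum (E : Ext R A n) {ι : Type*} (s : Finset ι)
    (ρ : ι → R) (μ : ι → (Fin n → ℕ)) :
    E.coord (∑ k ∈ s, E.φ (ρ k) * E.mono (μ k)) =
      ∑ k ∈ s, Finsupp.single (μ k) (ρ k) := by
  rw [coord_sum]
  exact Finset.sum_congr rfl fun k _ => coord_term E _ _

lemma coord_mul_apply (E : QCExt R A n) (a b : A) (γ : Fin n → ℕ) :
    E.coord (a * b) γ = ∑ ξ ∈ (E.coord a).support, ∑ β ∈ (E.coord b).support,
      (if γ = ξ + β then E.coord a ξ * E.σp ξ (E.coord b β) * E.cst ξ β else 0) := by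
  rw [mul_expand E a b]
  rw [coord_sum]
  rw [Finset.sum_apply']
  refine Finset.sum_congr rfl fun ξ _ => ?_
  rw [coord_term_sum, Finset.sum_apply']
  refine Finset.sum_congr rfl fun β _ => ?_
  rw [Finsupp.single_apply]
  simp [eq_comm]

lemma coord_mul_support (E : QCExt R A n) (a b : A) (γ : Fin n → ℕ)
    (h : E.coord (a * b) γ ≠ 0) :
    ∃ ξ, E.coord a ξ ≠ 0 ∧ ∃ β, E.coord b β ≠ 0 ∧ γ = ξ + β := by
  rw [coord_mul_apply] at h
  obtain ⟨ξ, hξ, h⟩ := Finset.exists_ne_zero_of_sum_ne_zero h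
  obtain ⟨β, hβ, h⟩ := Finset.exists_ne_zero_of_sum_ne_zero h
  refine ⟨ξ, Finsupp.mem_support_iff.mp hξ, β, Finsupp.mem_support_iff.mp hβ, ?_⟩
  by_contra hc
  simp [hc] at h

end SyzAux
namespace SyzAux
open SPBW

variable {n m : ℕ} {le : Mon n m → Mon n m → Prop}

lemma strict_compat (hle : IsMonomialOrder n m le) {α β : Fin n → ℕ} {i j : Fin m}
    (γ : Fin n → ℕ) (h : le (α, i) (β, j)) (hne : ((α, i) : Mon n m) ≠ (β, j)) :
    le (γ + α, i) (γ + β, j) ∧ ((γ + α, i) : Mon n m) ≠ (γ + β, j) := by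
  refine ⟨hle.compat _ _ _ _ _ h, fun hc => hne ?_⟩
  rw [Prod.mk.injEq] at hc ⊢
  refine ⟨?_, hc.2⟩
  funext k
  have := congrFun hc.1 k
  simp only [Pi.add_apply] at this
  omega

lemma le_set_finite (hle : IsMonomialOrder n m le) (X : Mon n m) :
    {Y : Mon n m | le Y X}.Finite := by
  classical
  set D := ∑ i, X.1 i with hD
  have hsub : {Y : Mon n m | le Y X} ⊆
      (Set.pi Set.univ fun _ : Fin n => Set.Iic D) ×ˢ (Set.univ : Set (Fin m)) := by
    rintro ⟨α, i⟩ hY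
    have hdeg : (∑ k, α k) ≤ D := by
      by_contra hc
      push_neg at hc
      have h1 : le X (α, i) := hle.deg_compat _ _ _ _ hc
      have h2 := hle.antisymm _ _ hY h1
      have := congrArg (fun Y : Mon n m => ∑ k, Y.1 k) h2
      simp only at this
      omega
    refine ⟨fun k _ => ?_, trivial⟩
    exact le_trans (Finset.single_le_sum (fun _ _ => Nat.zero_le _) (Finset.mem_univ k)) hdeg
  exact Set.Finite.subset (Set.Finite.prod (Set.Finite.pi fun _ => Set.finite_Iic D)
    Set.finite_univ) hsub

/-- Number of monomials `⪯ X`. -/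
noncomputable def rank (le : Mon n m → Mon n m → Prop) (X : Mon n m) : ℕ :=
  {Y : Mon n m | le Y X}.ncard

lemma rank_lt (hle : IsMonomialOrder n m le) {X' X : Mon n m}
    (h : le X' X) (hne : X' ≠ X) : rank le X' < rank le X := by
  apply Set.ncard_lt_ncard
  · constructor
    · intro Y hY
      exact hle.trans _ _ _ hY h
    · intro hc
      exact hne (hle.antisymm _ _ h (hc (hle.refl X)))
  · exact le_set_finite hle X

lemma exists_max (hle : IsMonomialOrder n m le) (s : Finset (Mon n m))
    (hs : s.Nonempty) : ∃ M ∈ s, ∀ Y ∈ s, le Y M := by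
  classical
  induction s using Finset.induction_on with
  | empty => exact absurd hs (by simp)
  | @insert a t hx ih =>
    rcases t.eq_empty_or_nonempty with rfl | ht
    · exact ⟨a, by simp, by simpa using hle.refl a⟩
    · obtain ⟨M, hM, hmax⟩ := ih ht
      rcases hle.total a M with h | h
      · exact ⟨M, Finset.mem_insert_of_mem hM, by
          intro Y hY
          rcases Finset.mem_insert.mp hY with rfl | hY
          · exact h
          · exact hmax Y hY⟩
      · exact ⟨a, Finset.mem_insert_self a t, by
          intro Y hY
          rcases Finset.mem_insert.mp hY with rfl | hY
          · exact hle.refl Y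
          · exact hle.trans _ _ _ (hmax Y hY) h⟩

end SyzAux
namespace SyzAux
open SPBW

lemma key {R A : Type*} [Ring R] [Ring A] {n m : ℕ}
    (E : SPBW.QCBijExt R A n)
    (le : Mon n m → Mon n m → Prop) (hle : IsMonomialOrder n m le)
    (t l : ℕ) (g : Fin t → Fin m → A)
    (Xg : Fin t → Mon n m) (hXg : ∀ j, IsLM E.toExt le (g j) (Xg j))
    (ltg : Fin t → Fin m → A)
    (hltg : ∀ j, ltg j = fun v =>
      if v = (Xg j).2 then
        E.φ (E.coord (g j (Xg j).2) (Xg j).1) * E.mono (Xg j).1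
      else 0)
    (Z : Fin l → Fin t → A)
    (hZ : ∀ b : Fin t → A,
      (∑ j, b j • ltg j) = 0 ↔ b ∈ Submodule.span A (Set.range Z))
    (d : Fin l → Mon n m)
    (hhom : ∀ v j,
      (∃ (r : R) (α : Fin n → ℕ), Z v j = E.φ r * E.mono α) ∧
      (Z v j ≠ 0 → ∃ (r : R) (α : Fin n → ℕ), r ≠ 0 ∧
        Z v j = E.φ r * E.mono α ∧ (α + (Xg j).1, (Xg j).2) = d v))
    (P : Fin l → Fin t → A)
    (hP : ∀ v, (∑ j, Z v j • g j) = ∑ j, P v j • g j)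
    (hPdeg : ∀ (v : Fin l) (j : Fin t) (ξ : Fin n → ℕ),
      E.coord (P v j) ξ ≠ 0 →
        le (ξ + (Xg j).1, (Xg j).2) (d v) ∧ (ξ + (Xg j).1, (Xg j).2) ≠ d v) :
    ∀ (N : ℕ) (X : Mon n m), rank le X ≤ N → ∀ z : Fin t → A,
      (∑ j, z j • g j) = 0 →
      (∀ j ξ, E.coord (z j) ξ ≠ 0 → le (ξ + (Xg j).1, (Xg j).2) X) →
      z ∈ Submodule.span A (Set.range fun v => Z v - P v) := by
  classical
  intro N
  induction N using Nat.strong_induction_on with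
  | _ N ih =>
  intro X hrank z hsyz hbound
  -- the "active" columns and the top-degree exponents
  set active : Fin t → Prop := fun j => (∀ i, (Xg j).1 i ≤ X.1 i) ∧ (Xg j).2 = X.2 with hactive_def
  set ξf : Fin t → (Fin n → ℕ) := fun j i => X.1 i - (Xg j).1 i with hξf_def
  have hξ : ∀ j, active j → ξf j + (Xg j).1 = X.1 := by
    intro j hj
    funext i
    have := hj.1 i
    simp only [hξf_def, Pi.add_apply]
    omega
  -- the vector of top terms of z
  set z'' : Fin t → A := fun j =>
    if active j then E.φ (E.coord (z j) (ξf j)) * E.mono (ξf j) else 0 with hz''_def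
  -- top coefficient of z j * g j X.2
  have hTop : ∀ j, E.coord (z j * g j (X.2)) X.1 =
      (if active j then
        E.coord (z j) (ξf j) *
          E.σp (ξf j) (E.coord (g j (Xg j).2) (Xg j).1) * E.cst (ξf j) (Xg j).1
      else 0) := by
    intro j
    rw [coord_mul_apply E.toQCExt (z j) (g j X.2) X.1]
    have hkey : ∀ ξ ∈ (E.coord (z j)).support, ∀ β ∈ (E.coord (g j X.2)).support,
        X.1 = ξ + β → β = (Xg j).1 ∧ active j ∧ ξ = ξf j := by
      intro ξ hξs β hβs hXeq
      have hξz := Finsupp.mem_support_iff.mp hξs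
      have hβz := Finsupp.mem_support_iff.mp hβs
      have hlm : le (β, X.2) (Xg j) := (hXg j).2 β X.2 hβz
      by_cases hc : ((β, X.2) : Mon n m) = Xg j
      · obtain ⟨hc1, hc2⟩ : β = (Xg j).1 ∧ X.2 = (Xg j).2 := Prod.ext_iff.mp hc
        have hact : active j := by
          refine ⟨fun i => ?_, hc2.symm⟩
          have h' := congrFun hXeq i
          have hb := congrFun hc1 i
          simp only [Pi.add_apply] at h'
          omega
        refine ⟨hc1, hact, ?_⟩
        funext i
        have h' := congrFun hXeq i
        have hb := congrFun hc1 i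
        simp only [Pi.add_apply] at h'
        simp only [hξf_def]
        omega
      · exfalso
        have hstrict := strict_compat hle ξ hlm hc
        have hzb := hbound j ξ hξz
        have hXeq2 : ((ξ + β, X.2) : Mon n m) = X := by rw [← hXeq]
        have h1 : le X ((ξ + (Xg j).1, (Xg j).2) : Mon n m) := by
          rw [← hXeq2]; exact hstrict.1
        have heq := hle.antisymm _ _ h1 hzb
        apply hstrict.2
        rw [hXeq2, heq]
    by_cases hact : active j
    · rw [if_pos hact]
      have hlmSb : (Xg j).1 ∈ (E.coord (g j X.2)).support := by
        rw [Finsupp.mem_support_iff, ← hact.2]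
        exact (hXg j).1
      rw [← Finset.sum_product']
      refine (Finset.sum_eq_single ((ξf j, (Xg j).1) : (Fin n → ℕ) × (Fin n → ℕ))
        ?_ ?_).trans ?_
      · rintro ⟨ξ, β⟩ hmem hne
        rw [Finset.mem_product] at hmem
        by_cases hind : X.1 = ξ + β
        · obtain ⟨hβ, -, hξe⟩ := hkey ξ hmem.1 β hmem.2 hind
          exact absurd (by rw [hβ, hξe]) hne
        · exact if_neg hind
      · intro hnmem
        have hns : ξf j ∉ (E.coord (z j)).support := by
          intro h
          exact hnmem (Finset.mem_product.mpr ⟨h, hlmSb⟩)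
        rw [Finsupp.notMem_support_iff.mp hns]
        simp
      · rw [if_pos (hξ j hact).symm, ← hact.2]
    · rw [if_neg hact]
      refine Finset.sum_eq_zero fun ξ hξs => Finset.sum_eq_zero fun β hβs => ?_
      by_cases hind : X.1 = ξ + β
      · exact absurd (hkey ξ hξs β hβs hind).2.1 hact
      · exact if_neg hind
  -- the sum of the top coefficients is 0
  have hS : (∑ j, if active j then
      E.coord (z j) (ξf j) *
        E.σp (ξf j) (E.coord (g j (Xg j).2) (Xg j).1) * E.cst (ξf j) (Xg j).1
      else 0) = 0 := by
    have h2 : (∑ j, z j * g j X.2) = (∑ j, z j • g j) X.2 := by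
      simp [Finset.sum_apply]
    calc (∑ j, if active j then
          E.coord (z j) (ξf j) *
            E.σp (ξf j) (E.coord (g j (Xg j).2) (Xg j).1) * E.cst (ξf j) (Xg j).1
          else 0)
        = ∑ j, E.coord (z j * g j X.2) X.1 :=
          Finset.sum_congr rfl fun j _ => (hTop j).symm
      _ = E.coord (∑ j, z j * g j X.2) X.1 := by
          rw [coord_sum E.toExt, Finset.sum_apply']
      _ = 0 := by
          rw [h2, hsyz]
          simp [coord_zero]
  -- z'' is a syzygy of the leading terms
  have hz''syz : (∑ j, z'' j • ltg j) = 0 := by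
    funext v
    rw [Finset.sum_apply]
    have hterm : ∀ j, (z'' j • ltg j) v =
        if v = X.2 then
          E.φ (if active j then
            E.coord (z j) (ξf j) *
              E.σp (ξf j) (E.coord (g j (Xg j).2) (Xg j).1) * E.cst (ξf j) (Xg j).1
            else 0) * E.mono X.1
        else 0 := by
      intro j
      rw [Pi.smul_apply, smul_eq_mul, hltg j]
      by_cases hact : active j
      · simp only [hz''_def, if_pos hact]
        by_cases hv : v = X.2
        · rw [if_pos hv, if_pos (by rw [hv, hact.2] : v = (Xg j).2)]
          rw [term_mul_term E.toQCExt, hξ j hact]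
        · rw [if_neg hv, if_neg (by rw [hact.2]; exact hv : v ≠ (Xg j).2), mul_zero]
      · simp only [hz''_def, if_neg hact]
        rw [zero_mul]
        simp
    rw [Finset.sum_congr rfl fun j _ => hterm j]
    by_cases hv : v = X.2
    · simp only [if_pos hv]
      rw [← Finset.sum_mul, ← map_sum, hS, map_zero, zero_mul]
      simp
    · simp only [if_neg hv, Finset.sum_const_zero]
      simp
  -- hence a combination of the Z's
  have hz''mem : z'' ∈ Submodule.span A (Set.range Z) := (hZ z'').mp hz''syz
  obtain ⟨a, ha⟩ := (Submodule.mem_span_range_iff_exists_fun A).mp hz''mem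
  -- extract the homogeneous components of the coefficients
  set activeU : Fin l → Prop := fun u => (∀ i, (d u).1 i ≤ X.1 i) ∧ (d u).2 = X.2
    with hactiveU_def
  set ζf : Fin l → (Fin n → ℕ) := fun u i => X.1 i - (d u).1 i with hζf_def
  set c : Fin l → A := fun u =>
    if activeU u then E.φ (E.coord (a u) (ζf u)) * E.mono (ζf u) else 0 with hc_def
  -- the homogeneous components still produce z''
  have hcZ : ∀ j, (∑ u, c u * Z u j) = z'' j := by
    intro j
    have haj : (∑ u, a u * Z u j) = z'' j := by
      have h := congrFun ha j
      simpa [Finset.sum_apply] using h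
    have claim1 : ∀ u, c u * Z u j =
        (if active j then E.φ (E.coord (a u * Z u j) (ξf j)) * E.mono (ξf j) else 0) := by
      intro u
      by_cases hZ0 : Z u j = 0
      · rw [hZ0, mul_zero, mul_zero]
        simp [coord_zero]
      · obtain ⟨r, α, hr0, hZuj, hdeg⟩ := (hhom u j).2 hZ0
        have hd1 : (d u).1 = α + (Xg j).1 := by rw [← hdeg]
        have hd2 : (d u).2 = (Xg j).2 := by rw [← hdeg]
        have hcoordZ : E.coord (Z u j) = Finsupp.single α r := by
          rw [hZuj, coord_term]
        by_cases hact : active j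
        · have hexp : E.coord (a u * Z u j) (ξf j) =
              ∑ ζ ∈ (E.coord (a u)).support,
                (if ξf j = ζ + α then E.coord (a u) ζ * E.σp ζ r * E.cst ζ α else 0) := by
            rw [coord_mul_apply E.toQCExt, hcoordZ]
            refine Finset.sum_congr rfl fun ζ _ => ?_
            rw [Finsupp.support_single_ne_zero α hr0, Finset.sum_singleton,
              Finsupp.single_eq_same]
          by_cases hau : activeU u
          · have hζα : ζf u + α = ξf j := by
              funext i
              have h1 := congrFun hd1 i
              have h2 := hau.1 i
              have h3 := hact.1 i
              simp only [Pi.add_apply] at h1 ⊢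
              simp only [hζf_def, hξf_def]
              omega
            have hsum : (∑ ζ ∈ (E.coord (a u)).support,
                (if ξf j = ζ + α then E.coord (a u) ζ * E.σp ζ r * E.cst ζ α else 0)) =
                E.coord (a u) (ζf u) * E.σp (ζf u) r * E.cst (ζf u) α := by
              refine (Finset.sum_eq_single (ζf u) ?_ ?_).trans ?_
              · intro ζ hζs hne
                refine if_neg fun hind => hne ?_
                funext i
                have h1 := congrFun hind i
                have h2 := congrFun hζα i
                simp only [Pi.add_apply] at h1 h2
                omega
              · intro hns
                rw [Finsupp.notMem_support_iff.mp hns]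
                simp
              · rw [if_pos hζα.symm]
            rw [if_pos hact, hexp, hsum]
            simp only [hc_def, if_pos hau]
            rw [hZuj, term_mul_term E.toQCExt, hζα]
          · have hc0 : c u = 0 := by simp only [hc_def]; rw [if_neg hau]
            rw [hc0, zero_mul, if_pos hact]
            have hcoord0 : E.coord (a u * Z u j) (ξf j) = 0 := by
              by_contra hne
              obtain ⟨ζ, hζ, β, hβ, hadd⟩ := coord_mul_support E.toQCExt _ _ _ hne
              have hβα : β = α := by
                by_contra hba
                rw [hcoordZ, Finsupp.single_eq_of_ne hba] at hβ
                exact hβ rfl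
              subst hβα
              apply hau
              constructor
              · intro i
                have h1 := congrFun hd1 i
                have h2 := congrFun hadd i
                have h3 := hact.1 i
                simp only [Pi.add_apply] at h1 h2
                simp only [hξf_def] at h2
                omega
              · rw [hd2, hact.2]
            rw [hcoord0, map_zero, zero_mul]
        · rw [if_neg hact]
          have hc0 : c u = 0 := by
            simp only [hc_def]
            rw [if_neg]
            intro hau
            apply hact
            constructor
            · intro i
              have h1 := congrFun hd1 i
              have h2 := hau.1 i
              simp only [Pi.add_apply] at h1
              omega
            · rw [← hd2, hau.2]
          rw [hc0, zero_mul]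
    calc (∑ u, c u * Z u j)
        = ∑ u, (if active j then E.φ (E.coord (a u * Z u j) (ξf j)) * E.mono (ξf j) else 0) :=
          Finset.sum_congr rfl fun u _ => claim1 u
      _ = z'' j := by
        by_cases hact : active j
        · simp only [if_pos hact]
          have h2 : (∑ u, E.coord (a u * Z u j) (ξf j)) = E.coord (z j) (ξf j) := by
            rw [← Finset.sum_apply', ← coord_sum E.toExt, haj]
            simp only [hz''_def, if_pos hact]
            rw [coord_term, Finsupp.single_eq_same]
          rw [← Finset.sum_mul, ← map_sum, h2]
          simp only [hz''_def, if_pos hact]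
        · simp only [if_neg hact, Finset.sum_const_zero]
          simp only [hz''_def, if_neg hact]
  -- the corrected syzygy
  set w : Fin t → A := ∑ u, c u • (Z u - P u) with hw_def
  have hw_mem : w ∈ Submodule.span A (Set.range fun v => Z v - P v) := by
    refine Submodule.sum_mem _ fun u _ => Submodule.smul_mem _ _ ?_
    exact Submodule.subset_span ⟨u, rfl⟩
  have hwj : ∀ j, w j = ∑ u, c u * (Z u j - P u j) := by
    intro j
    simp [hw_def, Finset.sum_apply]
  set znew : Fin t → A := z - w with hznew_def
  have hznew_syz : (∑ j, znew j • g j) = 0 := by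
    have hu0 : ∀ u, (∑ j, (c u * (Z u j - P u j)) • g j) = 0 := by
      intro u
      have h' : ∀ j, (c u * (Z u j - P u j)) • g j =
          c u • (Z u j • g j) - c u • (P u j • g j) := by
        intro j
        rw [mul_smul, sub_smul, smul_sub]
      rw [Finset.sum_congr rfl fun j _ => h' j, Finset.sum_sub_distrib,
        ← Finset.smul_sum, ← Finset.smul_sum, hP u, sub_self]
    have h'' : ∀ j, znew j • g j = z j • g j - ∑ u, (c u * (Z u j - P u j)) • g j := by
      intro j
      simp only [hznew_def, Pi.sub_apply]
      rw [hwj j, sub_smul, Finset.sum_smul]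
    calc (∑ j, znew j • g j)
        = ∑ j, (z j • g j - ∑ u, (c u * (Z u j - P u j)) • g j) :=
          Finset.sum_congr rfl fun j _ => h'' j
      _ = (∑ j, z j • g j) - ∑ j, ∑ u, (c u * (Z u j - P u j)) • g j :=
          Finset.sum_sub_distrib _ _
      _ = 0 := by
          rw [hsyz, Finset.sum_comm, Finset.sum_congr rfl fun u _ => hu0 u]
          simp
  have hznewj : ∀ j, znew j = (z j - z'' j) + ∑ u, c u * P u j := by
    intro j
    have h1 : (∑ u, c u * (Z u j - P u j)) = (∑ u, c u * Z u j) - ∑ u, c u * P u j := by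
      rw [← Finset.sum_sub_distrib]
      exact Finset.sum_congr rfl fun u _ => mul_sub _ _ _
    rw [hznew_def]
    simp only [Pi.sub_apply]
    rw [hwj j, h1, hcZ j]
    abel
  have hznew_bound : ∀ j ξ, E.coord (znew j) ξ ≠ 0 →
      le (ξ + (Xg j).1, (Xg j).2) X ∧ ((ξ + (Xg j).1, (Xg j).2) : Mon n m) ≠ X := by
    intro j ξ hξc
    have hsplit : E.coord (znew j) ξ =
        (E.coord (z j) ξ - E.coord (z'' j) ξ) + ∑ u, E.coord (c u * P u j) ξ := by
      rw [hznewj j, E.coord_add, coord_sub E.toExt, coord_sum E.toExt]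
      simp [Finset.sum_apply']
    rw [hsplit] at hξc
    have hcases : (E.coord (z j) ξ - E.coord (z'' j) ξ ≠ 0) ∨
        ∃ u, E.coord (c u * P u j) ξ ≠ 0 := by
      by_contra hcon
      push_neg at hcon
      obtain ⟨h1, h2⟩ := hcon
      apply hξc
      simp [h1, h2]
    rcases hcases with h1 | ⟨u, hu⟩
    · by_cases hact : active j
      · have hz''c : E.coord (z'' j) = Finsupp.single (ξf j) (E.coord (z j) (ξf j)) := by
          simp only [hz''_def, if_pos hact]
          rw [coord_term]
        by_cases hξe : ξ = ξf j
        · rw [hξe, hz''c, Finsupp.single_eq_same] at h1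
          exact absurd (sub_self _) h1
        · have hz0 : E.coord (z'' j) ξ = 0 := by
            rw [hz''c, Finsupp.single_eq_of_ne hξe]
          have hzc : E.coord (z j) ξ ≠ 0 := by
            rw [hz0, sub_zero] at h1; exact h1
          refine ⟨hbound j ξ hzc, fun hX => hξe ?_⟩
          obtain ⟨hX1, hX2⟩ : ξ + (Xg j).1 = X.1 ∧ (Xg j).2 = X.2 := Prod.ext_iff.mp hX
          funext i
          have h2 := congrFun hX1 i
          have h3 := hact.1 i
          simp only [Pi.add_apply] at h2
          simp only [hξf_def]
          omega
      · have hz0 : E.coord (z'' j) ξ = 0 := by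
          simp only [hz''_def, if_neg hact, coord_zero]
          rfl
        have hzc : E.coord (z j) ξ ≠ 0 := by
          rw [hz0, sub_zero] at h1; exact h1
        refine ⟨hbound j ξ hzc, fun hX => hact ?_⟩
        obtain ⟨hX1, hX2⟩ : ξ + (Xg j).1 = X.1 ∧ (Xg j).2 = X.2 := Prod.ext_iff.mp hX
        refine ⟨fun i => ?_, hX2⟩
        have h2 := congrFun hX1 i
        simp only [Pi.add_apply] at h2
        omega
    · have hcne : c u ≠ 0 := by
        intro h0
        rw [h0, zero_mul] at hu
        simp [coord_zero] at hu
      have hau : activeU u := by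
        by_contra hau
        apply hcne
        simp only [hc_def, if_neg hau]
      have hcc : E.coord (c u) = Finsupp.single (ζf u) (E.coord (a u) (ζf u)) := by
        simp only [hc_def, if_pos hau]
        rw [coord_term]
      obtain ⟨ζ, hζ, β, hβ, hadd⟩ := coord_mul_support E.toQCExt _ _ _ hu
      have hζe : ζ = ζf u := by
        by_contra hne
        rw [hcc, Finsupp.single_eq_of_ne hne] at hζ
        exact hζ rfl
      subst hζe
      have hpd := hPdeg u j β hβ
      have hst := strict_compat hle (ζf u) hpd.1 hpd.2
      have hXeq : ((ζf u + (d u).1, (d u).2) : Mon n m) = X := by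
        rw [Prod.ext_iff]
        refine ⟨?_, hau.2⟩
        funext i
        have h2 := hau.1 i
        simp only [Pi.add_apply, hζf_def]
        omega
      rw [hadd, add_assoc, ← hXeq]
      exact hst
  -- conclude
  by_cases hz0 : znew = 0
  · have : z = w := by
      have := sub_eq_zero.mp (hznew_def ▸ hz0 : z - w = 0)
      exact this
    rw [this]; exact hw_mem
  · have hjne : ∃ j, znew j ≠ 0 := by
      by_contra hc'
      push_neg at hc'
      exact hz0 (funext hc')
    set T : Finset (Mon n m) := Finset.univ.biUnion (fun j : Fin t =>
      (E.coord (znew j)).support.image fun ξ => ((ξ + (Xg j).1, (Xg j).2) : Mon n m))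
      with hT_def
    have hTne : T.Nonempty := by
      obtain ⟨j, hj⟩ := hjne
      have : (E.coord (znew j)).support.Nonempty := by
        rw [Finsupp.support_nonempty_iff]
        intro hc'
        exact hj (eq_zero_of_coord E.toExt _ hc')
      obtain ⟨ξ, hξs⟩ := this
      exact ⟨((ξ + (Xg j).1, (Xg j).2) : Mon n m), by
        rw [hT_def]
        exact Finset.mem_biUnion.mpr ⟨j, Finset.mem_univ j,
          Finset.mem_image.mpr ⟨ξ, hξs, rfl⟩⟩⟩
    obtain ⟨X', hX'T, hmax⟩ := exists_max hle T hTne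
    have hX'X : le X' X ∧ X' ≠ X := by
      rw [hT_def] at hX'T
      obtain ⟨j, -, hX'⟩ := Finset.mem_biUnion.mp hX'T
      obtain ⟨ξ, hξs, rfl⟩ := Finset.mem_image.mp hX'
      exact hznew_bound j ξ (Finsupp.mem_support_iff.mp hξs)
    have hznew_mem : znew ∈ Submodule.span A (Set.range fun v => Z v - P v) := by
      refine ih (rank le X') (lt_of_lt_of_le (rank_lt hle hX'X.1 hX'X.2) hrank) X'
        le_rfl znew hznew_syz ?_
      intro j ξ hξc
      refine hmax _ ?_
      rw [hT_def]
      exact Finset.mem_biUnion.mpr ⟨j, Finset.mem_univ j,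
        Finset.mem_image.mpr ⟨ξ, Finsupp.mem_support_iff.mpr hξc, rfl⟩⟩
    have : z = znew + w := by rw [hznew_def]; abel
    rw [this]
    exact Submodule.add_mem _ hznew_mem hw_mem

end SyzAux

open SPBW in
/-- **(Lemma 39.)** Let `A` be a quasi-commutative bijective σ-PBW extension,
`G = {g₁, …, g_t}` a Gröbner basis, `L_G = [lt(g₁) ⋯ lt(g_t)]` the matrix of
leading terms, and `Z(L_G)` a matrix of homogeneous generators of `Syz(L_G)`. Let
`P` be obtained by dividing each combination `Z(L_G)^T G^T` by `G`, so that
`Z(L_G)^T G^T = P^T G^T` with the division-algorithm degree bounds. Then the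
column module of `Z(L_G) − P` equals `Syz(G)`. -/
theorem syzygy_of_G_from_leading_terms
    (R A : Type*) [Ring R] [Ring A] (n m : ℕ)
    (E : SPBW.QCBijExt R A n)
    (le : Mon n m → Mon n m → Prop) (hle : IsMonomialOrder n m le)
    (t l : ℕ) (g : Fin t → Fin m → A) (hg0 : ∀ j, g j ≠ 0)
    -- `G` is a Gröbner basis (of the module it generates)
    (hGB : ∀ h ∈ Submodule.span A (Set.range g), h ≠ 0 →
      ∃ h', Reduces E.toExt le (Set.range g) h h')
    -- leading monomials of the `g_j`
    (Xg : Fin t → Mon n m) (hXg : ∀ j, IsLM E.toExt le (g j) (Xg j))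
    -- the columns of `L_G`: the leading terms `lt(g_j)`
    (ltg : Fin t → Fin m → A)
    (hltg : ∀ j, ltg j = fun v =>
      if v = (Xg j).2 then
        E.φ (E.coord (g j (Xg j).2) (Xg j).1) * E.mono (Xg j).1
      else 0)
    -- the columns of `Z(L_G)` generate `Syz(L_G)` …
    (Z : Fin l → Fin t → A)
    (hZ : ∀ b : Fin t → A,
      (∑ j, b j • ltg j) = 0 ↔ b ∈ Submodule.span A (Set.range Z))
    -- … and are homogeneous, of degrees `d v`
    (d : Fin l → Mon n m)
    (hhom : ∀ v j,
      (∃ (r : R) (α : Fin n → ℕ), Z v j = E.φ r * E.mono α) ∧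
      (Z v j ≠ 0 → ∃ (r : R) (α : Fin n → ℕ), r ≠ 0 ∧
        Z v j = E.φ r * E.mono α ∧ (α + (Xg j).1, (Xg j).2) = d v))
    -- `P` divides the combinations `Z(L_G)^T G^T` by `G` : `Z(L_G)^T G^T = P^T G^T`
    (P : Fin l → Fin t → A)
    (hP : ∀ v, (∑ j, Z v j • g j) = ∑ j, P v j • g j)
    -- with the division-algorithm degree bounds:
    -- `max_j lm(lm(p_j) lm(g_j)) ≺ d v`
    (hPdeg : ∀ (v : Fin l) (j : Fin t) (ξ : Fin n → ℕ),
      E.coord (P v j) ξ ≠ 0 →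
        le (ξ + (Xg j).1, (Xg j).2) (d v) ∧ (ξ + (Xg j).1, (Xg j).2) ≠ d v) :
    ∀ z : Fin t → A,
      (∑ j, z j • g j) = 0 ↔
        z ∈ Submodule.span A (Set.range fun v => Z v - P v) := by
  classical
  intro z
  constructor
  · intro hsyz
    by_cases hz0 : z = 0
    · rw [hz0]; exact Submodule.zero_mem _
    · have hjne : ∃ j, z j ≠ 0 := by
        by_contra hc'
        push_neg at hc'
        exact hz0 (funext hc')
      set T : Finset (Mon n m) := Finset.univ.biUnion (fun j : Fin t =>
        (E.coord (z j)).support.image fun ξ => ((ξ + (Xg j).1, (Xg j).2) : Mon n m))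
        with hT_def
      have hTne : T.Nonempty := by
        obtain ⟨j, hj⟩ := hjne
        have hns : (E.coord (z j)).support.Nonempty := by
          rw [Finsupp.support_nonempty_iff]
          intro hc'
          exact hj (SyzAux.eq_zero_of_coord E.toExt _ hc')
        obtain ⟨ξ, hξs⟩ := hns
        exact ⟨((ξ + (Xg j).1, (Xg j).2) : Mon n m),
          Finset.mem_biUnion.mpr ⟨j, Finset.mem_univ j,
            Finset.mem_image.mpr ⟨ξ, hξs, rfl⟩⟩⟩
      obtain ⟨X₀, hX₀T, hmax⟩ := SyzAux.exists_max hle T hTne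
      refine SyzAux.key E le hle t l g Xg hXg ltg hltg Z hZ d hhom P hP hPdeg
        (SyzAux.rank le X₀) X₀ le_rfl z hsyz ?_
      intro j ξ hξc
      exact hmax _ (Finset.mem_biUnion.mpr ⟨j, Finset.mem_univ j,
        Finset.mem_image.mpr ⟨ξ, Finsupp.mem_support_iff.mpr hξc, rfl⟩⟩)
  · intro hmem
    induction hmem using Submodule.span_induction with
    | mem x hx =>
      obtain ⟨v, rfl⟩ := hx
      simp only [Pi.sub_apply, sub_smul]
      rw [Finset.sum_sub_distrib, hP v, sub_self]
    | zero => simp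
    | add x y _ _ hx hy =>
      simp only [Pi.add_apply, add_smul]
      rw [Finset.sum_add_distrib, hx, hy, add_zero]
    | smul a x _ hx =>
      simp only [Pi.smul_apply, smul_eq_mul, mul_smul]
      rw [← Finset.smul_sum, hx, smul_zero]
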